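/- arXiv:2409.03554 — 2 statements merged into one kernel-verified Lean document; each statement's English description precedes it below -/
import Mathlib

section
/- Let n ≥ 1, let Ω ⊆ ℝⁿ be open and let w : Ω → ℝ be a C³ function satisfying −Δ_{φₙ} w − w = 1 on Ω. Then Δ_{φₙ}(|∇w|²) ≥ 0 at every point of Ω, and for each x ∈ Ω equality Δ_{φₙ}(|∇w|²)(x) = 0 holds if and only if the Hessian ∇²w vanishes at x. -/
noncomputable section

open scoped BigOperators

/-- Euclidean space ℝⁿ. -/
abbrev En (n : ℕ) := EuclideanSpace ℝ (Fin n)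

/-- The (unweighted) divergence of a vector field on ℝⁿ: div Y = ∑ᵢ ∂ᵢYᵢ. -/
noncomputable def ediv {n : ℕ} (Y : En n → En n) (x : En n) : ℝ :=
  ∑ i, fderiv ℝ Y x (EuclideanSpace.single i 1) i

/-- The Laplacian Δf = div ∇f. -/
noncomputable def lap {n : ℕ} (f : En n → ℝ) (x : En n) : ℝ :=
  ediv (fun y => gradient f y) x

/-- Weighted Laplacian: Δ_φ u = Δu − ⟨∇φ, ∇u⟩. -/
noncomputable def lapW {n : ℕ} (φ : En n → ℝ) (f : En n → ℝ) (x : En n) : ℝ :=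
  lap f x - (inner ℝ (gradient φ x) (gradient f x) : ℝ)

/-- The Gaussian weight φₙ(x) = |x|²/2 + (n/2)·log(2π). -/
noncomputable def gaussW (n : ℕ) (x : En n) : ℝ :=
  ‖x‖ ^ 2 / 2 + (n / 2 : ℝ) * Real.log (2 * Real.pi)

/-- The (i,j)-entry of the Hessian of `f` at `x`: ∂ᵢ( (∇f)ⱼ ). -/
noncomputable def hessC {n : ℕ} (f : En n → ℝ) (x : En n) (i j : Fin n) : ℝ :=
  fderiv ℝ (fun y => gradient f y j) x (EuclideanSpace.single i 1)

def ee {n : ℕ} (i : Fin n) : En n := EuclideanSpace.single i 1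

/-- directional (partial) derivative -/
def pd {n : ℕ} (f : En n → ℝ) (i : Fin n) (y : En n) : ℝ := fderiv ℝ f y (ee i)

lemma inner_grad {n : ℕ} (f : En n → ℝ) (x v : En n) :
    (inner ℝ (gradient f x) v : ℝ) = fderiv ℝ f x v := by
  rw [gradient]
  exact InnerProductSpace.toDual_symm_apply

lemma grad_coord {n : ℕ} (f : En n → ℝ) (x : En n) (j : Fin n) :
    gradient f x j = pd f j x := by
  have h := inner_grad f x (ee j)
  rwa [real_inner_comm, ee, EuclideanSpace.inner_single_left, map_one, one_mul] at h

lemma pd_fderiv {n : ℕ} (f : En n → ℝ) (x : En n)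
    (hdf : DifferentiableAt ℝ (fderiv ℝ f) x) (u v : En n) :
    fderiv ℝ (fun y => fderiv ℝ f y v) x u = fderiv ℝ (fderiv ℝ f) x u v := by
  have h := ((ContinuousLinearMap.apply ℝ ℝ v).hasFDerivAt.comp x hdf.hasFDerivAt).fderiv
  rw [show (fun y => fderiv ℝ f y v) = (ContinuousLinearMap.apply ℝ ℝ v) ∘ (fderiv ℝ f) from rfl,
    h]
  rfl

lemma pd_contDiffAt {n : ℕ} {f : En n → ℝ} {x : En n} {m : ℕ} (hf : ContDiffAt ℝ (m + 1) f x)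
    (j : Fin n) : ContDiffAt ℝ m (pd f j) x := by
  have h1 : ContDiffAt ℝ m (fderiv ℝ f) x := by
    refine hf.fderiv_right ?_
    norm_cast
  exact (ContinuousLinearMap.apply ℝ ℝ (ee j)).contDiff.contDiffAt.comp x h1

lemma clairaut {n : ℕ} {f : En n → ℝ} {x : En n} (hf : ContDiffAt ℝ 2 f x) (i j : Fin n) :
    pd (pd f j) i x = pd (pd f i) j x := by
  have hdf : DifferentiableAt ℝ (fderiv ℝ f) x :=
    (hf.fderiv_right (m := 1) (by norm_num)).differentiableAt (by norm_num)
  have hs := hf.isSymmSndFDerivAt (by simp)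
  show fderiv ℝ (fun y => fderiv ℝ f y (ee j)) x (ee i)
      = fderiv ℝ (fun y => fderiv ℝ f y (ee i)) x (ee j)
  rw [pd_fderiv f x hdf, pd_fderiv f x hdf]
  exact hs (ee i) (ee j)

lemma lap_eq {n : ℕ} (f : En n → ℝ) (x : En n) (hf : ContDiffAt ℝ 2 f x) :
    lap f x = ∑ i, pd (pd f i) i x := by
  have hdf : DifferentiableAt ℝ (fderiv ℝ f) x :=
    (hf.fderiv_right (m := 1) (by norm_num)).differentiableAt (by norm_num)
  have hA : (fun y => gradient f y)
      = (fun ℓ => (InnerProductSpace.toDual ℝ (En n)).symm ℓ) ∘ (fderiv ℝ f) := rfl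
  have hgrad : fderiv ℝ (fun y => gradient f y) x
      = ((InnerProductSpace.toDual ℝ (En n)).symm.toContinuousLinearEquiv
          : (En n →L[ℝ] ℝ) ≃L[ℝ] En n).toContinuousLinearMap.comp (fderiv ℝ (fderiv ℝ f) x) := by
    rw [hA]
    exact (((InnerProductSpace.toDual ℝ (En n)).symm.toContinuousLinearEquiv
          : (En n →L[ℝ] ℝ) ≃L[ℝ] En n).toContinuousLinearMap.hasFDerivAt.comp x
          hdf.hasFDerivAt).fderiv
  unfold lap ediv
  refine Finset.sum_congr rfl fun i _ => ?_
  rw [show EuclideanSpace.single i (1:ℝ) = ee i from rfl, hgrad]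
  show ((InnerProductSpace.toDual ℝ (En n)).symm (fderiv ℝ (fderiv ℝ f) x (ee i))) i
      = pd (pd f i) i x
  have h2 : ((InnerProductSpace.toDual ℝ (En n)).symm (fderiv ℝ (fderiv ℝ f) x (ee i))) i
      = (inner ℝ ((InnerProductSpace.toDual ℝ (En n)).symm (fderiv ℝ (fderiv ℝ f) x (ee i)))
          (ee i) : ℝ) := by
    rw [real_inner_comm, ee, EuclideanSpace.inner_single_left, map_one, one_mul]
  rw [h2, InnerProductSpace.toDual_symm_apply]
  exact (pd_fderiv f x hdf (ee i) (ee i)).symm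

lemma pd_sum {n m : ℕ} (F : Fin m → En n → ℝ) (i : Fin n) (y : En n)
    (hF : ∀ j, DifferentiableAt ℝ (F j) y) :
    pd (fun z => ∑ j, F j z) i y = ∑ j, pd (F j) i y := by
  unfold pd
  rw [fderiv_fun_sum (fun j _ => hF j)]
  simp

lemma pd_mul {n : ℕ} (F G : En n → ℝ) (i : Fin n) (y : En n)
    (hF : DifferentiableAt ℝ F y) (hG : DifferentiableAt ℝ G y) :
    pd (fun z => F z * G z) i y = F y * pd G i y + G y * pd F i y := by
  unfold pd
  rw [fderiv_fun_mul hF hG]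
  simp [mul_comm]

lemma pd_coord {n : ℕ} (j i : Fin n) (y : En n) :
    pd (fun z : En n => z j) i y = if j = i then 1 else 0 := by
  unfold pd
  rw [show (fun z : En n => z j) = (EuclideanSpace.proj j : En n →L[ℝ] ℝ) from rfl,
    ContinuousLinearMap.fderiv]
  simp [ee, EuclideanSpace.single_apply]

lemma pd_const {n : ℕ} (c : ℝ) (i : Fin n) (y : En n) :
    pd (fun _ : En n => c) i y = 0 := by
  unfold pd; rw [fderiv_fun_const]; simp

lemma pd_add {n : ℕ} (F G : En n → ℝ) (i : Fin n) (y : En n)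
    (hF : DifferentiableAt ℝ F y) (hG : DifferentiableAt ℝ G y) :
    pd (fun z => F z + G z) i y = pd F i y + pd G i y := by
  unfold pd; rw [fderiv_fun_add hF hG]; simp

lemma pd_sub {n : ℕ} (F G : En n → ℝ) (i : Fin n) (y : En n)
    (hF : DifferentiableAt ℝ F y) (hG : DifferentiableAt ℝ G y) :
    pd (fun z => F z - G z) i y = pd F i y - pd G i y := by
  unfold pd; rw [fderiv_fun_sub hF hG]; simp

lemma norm_sq_eq {n : ℕ} (v : En n) : ‖v‖ ^ 2 = ∑ i, v i * v i := by
  rw [← real_inner_self_eq_norm_sq]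
  exact PiLp.inner_apply v v

lemma grad_gauss {n : ℕ} (x : En n) : gradient (gaussW n) x = x := by
  have hg : gaussW n = fun y : En n => (∑ i, y i * y i) / 2
      + (n / 2 : ℝ) * Real.log (2 * Real.pi) := by
    funext y; rw [gaussW, norm_sq_eq]
  apply PiLp.ext
  intro j
  rw [grad_coord, hg]
  have hd : ∀ (y : En n) (i : Fin n), DifferentiableAt ℝ (fun z : En n => z i) y :=
    fun y i => (EuclideanSpace.proj i : En n →L[ℝ] ℝ).differentiableAt
  have h1 : pd (fun y : En n => (∑ i, y i * y i) / 2
      + (n / 2 : ℝ) * Real.log (2 * Real.pi)) j x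
      = pd (fun y : En n => (∑ i, y i * y i) / 2) j x := by
    have hdS : DifferentiableAt ℝ (fun y : En n => ∑ i, y i * y i) x :=
      DifferentiableAt.fun_sum fun i _ => (hd x i).fun_mul (hd x i)
    have hdiv : DifferentiableAt ℝ (fun y : En n => (∑ i, y i * y i) / 2) x := by
      simp only [div_eq_mul_inv]
      exact hdS.mul_const _
    rw [pd_add _ _ _ _ hdiv (differentiableAt_const _), pd_const, add_zero]
  have h2 : pd (fun y : En n => (∑ i, y i * y i) / 2) j x
      = pd (fun y : En n => ∑ i, y i * y i) j x / 2 := by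
    unfold pd
    have : (fun y : En n => (∑ i, y i * y i) / 2)
        = fun y : En n => (∑ i, y i * y i) * (2:ℝ)⁻¹ := by
      funext y; rw [div_eq_mul_inv]
    rw [this, fderiv_mul_const (DifferentiableAt.fun_sum fun i _ => (hd x i).fun_mul (hd x i))]
    simp [div_eq_mul_inv, mul_comm]
  rw [h1, h2, pd_sum _ _ _ (fun i => (hd x i).fun_mul (hd x i))]
  have h3 : ∀ i, pd (fun z : En n => z i * z i) j x
      = if i = j then x i + x i else 0 := by
    intro i; rw [pd_mul _ _ _ _ (hd x i) (hd x i), pd_coord]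
    split <;> simp <;> ring
  rw [Finset.sum_congr rfl (fun i _ => h3 i), Finset.sum_ite_eq' Finset.univ j]
  simp


lemma pd_congr_nhds {n : ℕ} {f g : En n → ℝ} {x : En n} (h : f =ᶠ[nhds x] g) (i : Fin n) :
    pd f i x = pd g i x := by
  unfold pd; rw [h.fderiv_eq]

lemma pd_const_mul {n : ℕ} (c : ℝ) (F : En n → ℝ) (i : Fin n) (y : En n)
    (hF : DifferentiableAt ℝ F y) :
    pd (fun z => c * F z) i y = c * pd F i y := by
  unfold pd; rw [fderiv_const_mul hF]; simp

lemma inner_eq_sum {n : ℕ} (u v : En n) : (inner ℝ u v : ℝ) = ∑ i, u i * v i := by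
  rw [PiLp.inner_apply]; exact Finset.sum_congr rfl fun i _ => by rw [RCLike.inner_apply']; rfl


/-- if `w` is a C³ solution of −Δ_{φₙ}w − w = 1 on an open set Ω, then
Δ_{φₙ}(|∇w|²) ≥ 0 on Ω, with equality at x ∈ Ω iff the Hessian of `w` vanishes at x. -/
theorem stmt3 (n : ℕ) (hn : 1 ≤ n) (Ω : Set (En n)) (hΩ : IsOpen Ω)
    (w : En n → ℝ) (hw : ContDiffOn ℝ 3 w Ω)
    (hpde : ∀ x ∈ Ω, -lapW (gaussW n) w x - w x = 1) :
    ∀ x ∈ Ω,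
      0 ≤ lapW (gaussW n) (fun y => ‖gradient w y‖ ^ 2) x
      ∧ (lapW (gaussW n) (fun y => ‖gradient w y‖ ^ 2) x = 0
          ↔ ∀ i j, hessC w x i j = 0) := by
  intro x hx
  have nbhd : Ω ∈ nhds x := hΩ.mem_nhds hx
  have c3 : ∀ y ∈ Ω, ContDiffAt ℝ 3 w y := fun y hy => hw.contDiffAt (hΩ.mem_nhds hy)
  have d1 : ∀ y ∈ Ω, ∀ j, ContDiffAt ℝ 2 (pd w j) y := by
    intro y hy j
    exact pd_contDiffAt (m := 2) (by exact_mod_cast c3 y hy) j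
  have d2 : ∀ y ∈ Ω, ∀ i j, ContDiffAt ℝ 1 (pd (pd w j) i) y := by
    intro y hy i j
    exact pd_contDiffAt (m := 1) (by exact_mod_cast d1 y hy j) i
  have d1' : ∀ y ∈ Ω, ∀ j, DifferentiableAt ℝ (pd w j) y :=
    fun y hy j => (d1 y hy j).differentiableAt (by norm_num)
  have d2' : ∀ y ∈ Ω, ∀ i j, DifferentiableAt ℝ (pd (pd w j) i) y :=
    fun y hy i j => (d2 y hy i j).differentiableAt (by norm_num)
  have dw : ∀ y ∈ Ω, DifferentiableAt ℝ w y :=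
    fun y hy => (c3 y hy).differentiableAt (by norm_num)
  -- the function |∇w|² as a sum of squares
  have gfun : (fun y => ‖gradient w y‖ ^ 2) = fun y => ∑ j, pd w j y * pd w j y := by
    funext y
    rw [norm_sq_eq]
    exact Finset.sum_congr rfl fun j _ => by rw [grad_coord]
  set G : Fin n → ℝ := fun j => pd w j x with hG
  set H : Fin n → Fin n → ℝ := fun i j => pd (pd w j) i x with hH
  -- Clairaut
  have Hsymm : ∀ y ∈ Ω, ∀ i j, pd (pd w j) i y = pd (pd w i) j y :=
    fun y hy i j => clairaut ((c3 y hy).of_le (by norm_num)) i j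
  -- first derivative of g on Ω
  have pdg : ∀ y ∈ Ω, ∀ i, pd (fun y => ‖gradient w y‖ ^ 2) i y
      = ∑ j, 2 * (pd w j y * pd (pd w j) i y) := by
    intro y hy i
    rw [gfun, pd_sum _ _ _ (fun j => (d1' y hy j).fun_mul (d1' y hy j))]
    refine Finset.sum_congr rfl fun j _ => ?_
    rw [pd_mul _ _ _ _ (d1' y hy j) (d1' y hy j)]
    ring
  -- smoothness of g
  have gC2 : ContDiffAt ℝ 2 (fun y => ‖gradient w y‖ ^ 2) x := by
    rw [gfun]
    exact ContDiffAt.sum fun j _ => (d1 x hx j).mul (d1 x hx j)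
  -- second derivatives of g at x
  have pdgi_ev : ∀ i, pd (fun y => ‖gradient w y‖ ^ 2) i
      =ᶠ[nhds x] fun y => ∑ j, 2 * (pd w j y * pd (pd w j) i y) :=
    fun i => Filter.eventuallyEq_of_mem nbhd (fun y hy => pdg y hy i)
  have pd2g : ∀ i, pd (pd (fun y => ‖gradient w y‖ ^ 2) i) i x
      = ∑ j, 2 * (G j * pd (pd (pd w j) i) i x + H i j * H i j) := by
    intro i
    rw [pd_congr_nhds (pdgi_ev i) i,
      pd_sum _ _ _ (fun j => ((d1' x hx j).fun_mul (d2' x hx i j)).const_mul 2)]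
    refine Finset.sum_congr rfl fun j _ => ?_
    rw [pd_const_mul _ _ _ _ ((d1' x hx j).fun_mul (d2' x hx i j)),
      pd_mul _ _ _ _ (d1' x hx j) (d2' x hx i j)]
  -- third derivative symmetry
  have third : ∀ i j, pd (pd (pd w j) i) i x = pd (pd (pd w i) i) j x := by
    intro i j
    have e1 : pd (pd w j) i =ᶠ[nhds x] pd (pd w i) j :=
      Filter.eventuallyEq_of_mem nbhd (fun y hy => Hsymm y hy i j)
    rw [pd_congr_nhds e1 i]
    exact clairaut (d1 x hx i) i j
  -- the PDE in coordinates
  have hpde' : ∀ y ∈ Ω, (fun y => ∑ i, pd (pd w i) i y) y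
      = (fun y => (∑ i, y i * pd w i y) - 1 - w y) y := by
    intro y hy
    have h0 := hpde y hy
    rw [lapW, lap_eq w y ((c3 y hy).of_le (by norm_num)), grad_gauss, inner_eq_sum] at h0
    have : ∑ i, y i * gradient w y i = ∑ i, y i * pd w i y :=
      Finset.sum_congr rfl fun i _ => by rw [grad_coord]
    rw [this] at h0
    simp only []
    linarith
  -- differentiate the PDE at x in direction j
  have Tsum : ∀ j, ∑ i, pd (pd (pd w i) i) j x = ∑ i, x i * H j i := by
    intro j
    have ev : (fun y => ∑ i, pd (pd w i) i y)
        =ᶠ[nhds x] fun y => (∑ i, y i * pd w i y) - 1 - w y :=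
      Filter.eventuallyEq_of_mem nbhd hpde'
    have hcoord : ∀ (y : En n) (i : Fin n), DifferentiableAt ℝ (fun z : En n => z i) y :=
      fun y i => (EuclideanSpace.proj i : En n →L[ℝ] ℝ).differentiableAt
    have lhs : pd (fun y => ∑ i, pd (pd w i) i y) j x = ∑ i, pd (pd (pd w i) i) j x :=
      pd_sum _ _ _ (fun i => d2' x hx i i)
    have dsum : DifferentiableAt ℝ (fun y : En n => ∑ i, y i * pd w i y) x :=
      DifferentiableAt.fun_sum fun i _ => (hcoord x i).fun_mul (d1' x hx i)
    have rhs : pd (fun y => (∑ i, y i * pd w i y) - 1 - w y) j x = ∑ i, x i * H j i := by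
      rw [show (fun y : En n => (∑ i, y i * pd w i y) - 1 - w y)
          = fun y : En n => ((∑ i, y i * pd w i y) - 1) - w y from rfl,
        pd_sub _ _ _ _ (dsum.fun_sub (differentiableAt_const 1)) (dw x hx),
        pd_sub _ _ _ _ dsum (differentiableAt_const 1), pd_const,
        pd_sum _ _ _ (fun i => (hcoord x i).fun_mul (d1' x hx i))]
      have : ∀ i, pd (fun z : En n => z i * pd w i z) j x
          = x i * H j i + (if i = j then G i else 0) := by
        intro i
        rw [pd_mul _ _ _ _ (hcoord x i) (d1' x hx i), pd_coord]
        split <;> simp [hH] <;> ring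
      rw [Finset.sum_congr rfl fun i _ => this i, Finset.sum_add_distrib,
        Finset.sum_ite_eq' Finset.univ j G]
      simp [hG]
    rw [← lhs, pd_congr_nhds ev j, rhs]
  -- key identity
  have HsymmX : ∀ i j, H i j = H j i := fun i j => Hsymm x hx i j
  have hT : ∀ j, ∑ i, pd (pd (pd w j) i) i x = ∑ i, x i * H j i := by
    intro j
    rw [Finset.sum_congr rfl fun i _ => third i j]
    exact Tsum j
  have key : lapW (gaussW n) (fun y => ‖gradient w y‖ ^ 2) x = 2 * ∑ i, ∑ j, H i j ^ 2 := by
    rw [lapW, lap_eq _ x gC2, grad_gauss, inner_eq_sum]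
    have hl : ∑ i, pd (pd (fun y => ‖gradient w y‖ ^ 2) i) i x
        = ∑ j, (2 * G j * (∑ i, x i * H j i) + 2 * ∑ i, H i j * H i j) := by
      calc ∑ i, pd (pd (fun y => ‖gradient w y‖ ^ 2) i) i x
          = ∑ i, ∑ j, 2 * (G j * pd (pd (pd w j) i) i x + H i j * H i j) :=
            Finset.sum_congr rfl fun i _ => pd2g i
        _ = ∑ j, ∑ i, 2 * (G j * pd (pd (pd w j) i) i x + H i j * H i j) := Finset.sum_comm
        _ = ∑ j, (2 * G j * (∑ i, pd (pd (pd w j) i) i x) + 2 * ∑ i, H i j * H i j) := by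
            refine Finset.sum_congr rfl fun j _ => ?_
            rw [Finset.mul_sum, Finset.mul_sum, ← Finset.sum_add_distrib]
            exact Finset.sum_congr rfl fun i _ => by ring
        _ = ∑ j, (2 * G j * (∑ i, x i * H j i) + 2 * ∑ i, H i j * H i j) := by
            refine Finset.sum_congr rfl fun j _ => ?_
            rw [hT j]
    have hw2 : ∑ i, x i * gradient (fun y => ‖gradient w y‖ ^ 2) x i
        = ∑ j, 2 * G j * (∑ i, x i * H j i) := by
      calc ∑ i, x i * gradient (fun y => ‖gradient w y‖ ^ 2) x i
          = ∑ i, ∑ j, 2 * (G j * (x i * H i j)) := by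
            refine Finset.sum_congr rfl fun i _ => ?_
            rw [grad_coord, pdg x hx i, Finset.mul_sum]
            exact Finset.sum_congr rfl fun j _ => by ring
        _ = ∑ j, ∑ i, 2 * (G j * (x i * H i j)) := Finset.sum_comm
        _ = ∑ j, 2 * G j * (∑ i, x i * H j i) := by
            refine Finset.sum_congr rfl fun j _ => ?_
            rw [Finset.mul_sum]
            refine Finset.sum_congr rfl fun i _ => ?_
            rw [HsymmX i j]
            ring
    rw [hl, hw2, Finset.sum_add_distrib]
    have hB : ∑ j, (2:ℝ) * ∑ i, H i j * H i j = 2 * ∑ i, ∑ j, H i j ^ 2 := by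
      rw [← Finset.mul_sum, Finset.sum_comm]
      congr 1
      exact Finset.sum_congr rfl fun i _ => Finset.sum_congr rfl fun j _ => (pow_two (H i j)).symm
    rw [hB]
    ring
  constructor
  · rw [key]; positivity
  · rw [key]
    constructor
    · intro h i j
      have hnn : ∀ p ∈ Finset.univ (α := Fin n), (0:ℝ) ≤ ∑ q, H p q ^ 2 :=
        fun p _ => Finset.sum_nonneg fun q _ => sq_nonneg _
      have hz : ∑ i, ∑ j, H i j ^ 2 = 0 := by linarith
      have h1 := (Finset.sum_eq_zero_iff_of_nonneg hnn).1 hz i (Finset.mem_univ i)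
      have h2 := (Finset.sum_eq_zero_iff_of_nonneg
        (fun q _ => sq_nonneg (H i q))).1 h1 j (Finset.mem_univ j)
      have hij : H i j = 0 := by
        exact pow_eq_zero_iff (by norm_num) |>.1 h2
      have : hessC w x i j = H i j := by
        rw [hessC, show (fun y => gradient w y j) = pd w j from funext fun y => grad_coord w y j]
        rfl
      rw [this, hij]
    · intro h
      have : ∀ i j, H i j = 0 := by
        intro i j
        have : hessC w x i j = H i j := by
          rw [hessC, show (fun y => gradient w y j) = pd w j from funext fun y => grad_coord w y j]
          rfl
        rw [← this]; exact h i j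
      simp [this]
end
end

section
/- Let n ≥ 1, let Ω ⊆ ℝⁿ be a nonempty connected open set, let c ≥ 0, and let w : Ω → ℝ be a C³ function satisfying −Δ_{φₙ} w − w = 1 on Ω and |∇w(x)| = c for every x ∈ Ω. Then there exists a vector a ∈ ℝⁿ with |a| = c such that w(x) = ⟨a, x⟩ − 1 for all x ∈ Ω. In particular w is an affine function, so the zero set of w within Ω is contained in a hyperplane. -/
noncomputable section

open scoped BigOperators

/- ------------------------------------------------------------------ -/
/- Auxiliary development                                               -/
/- ------------------------------------------------------------------ -/

open InnerProductSpace Filter Topology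

local notation "⟪" x ", " y "⟫" => @inner ℝ _ _ x y

namespace Stmt7Aux

variable {n : ℕ}

/-- The gradient vector field of `w`, as a named function. -/
noncomputable def gw (w : En n → ℝ) : En n → En n := fun y => gradient w y

/-- First derivative of the gradient field (the Hessian as a CLM-valued map). -/
noncomputable def Dg (w : En n → ℝ) : En n → En n →L[ℝ] En n := fun y => fderiv ℝ (gw w) y

/-- Second derivative of the gradient field. -/
noncomputable def D2g (w : En n → ℝ) : En n → En n →L[ℝ] En n →L[ℝ] En n :=
  fun y => fderiv ℝ (Dg w) y

/-- Standard basis vectors. -/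
noncomputable def e (n : ℕ) (i : Fin n) : En n := EuclideanSpace.single i 1

lemma inner_e (v : En n) (i : Fin n) : ⟪v, e n i⟫ = v i := by
  simp [e, EuclideanSpace.inner_single_right]

lemma fderiv_apply_eq_inner_gradient {f : En n → ℝ} {x : En n}
    (h : DifferentiableAt ℝ f x) (v : En n) : fderiv ℝ f x v = ⟪gw f x, v⟫ := by
  have := h.hasGradientAt.hasFDerivAt.fderiv
  rw [this]
  exact toDual_apply_apply ..

lemma inner_gw (w : En n → ℝ) (y z : En n) : ⟪gw w y, z⟫ = fderiv ℝ w y z := by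
  simp only [gw, gradient]
  exact toDual_symm_apply

lemma hasGradientAt_gaussW (x : En n) : HasGradientAt (gaussW n) x x := by
  rw [hasGradientAt_iff_hasFDerivAt]
  have h1 : HasFDerivAt (fun y : En n => ⟪y, y⟫)
      ((fderivInnerCLM ℝ (x, x)).comp ((ContinuousLinearMap.id ℝ (En n)).prod
        (ContinuousLinearMap.id ℝ (En n)))) x :=
    (hasFDerivAt_id x).inner ℝ (hasFDerivAt_id x)
  have h2 := (h1.const_smul (1/2 : ℝ)).add_const ((n / 2 : ℝ) * Real.log (2 * Real.pi))
  have hfun : (fun y : En n => (1/2 : ℝ) • ⟪y, y⟫ + (n / 2 : ℝ) * Real.log (2 * Real.pi))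
      = gaussW n := by
    funext y; rw [smul_eq_mul, real_inner_self_eq_norm_sq, gaussW]; ring
  simp only [Pi.smul_apply] at h2
  rw [hfun] at h2
  refine h2.congr_fderiv ?_
  ext v
  simp only [ContinuousLinearMap.smul_apply, ContinuousLinearMap.coe_comp',
    Function.comp_apply, ContinuousLinearMap.prod_apply, ContinuousLinearMap.coe_id', id,
    fderivInnerCLM_apply, toDual_apply_apply, smul_eq_mul]
  rw [real_inner_comm]; ring

lemma gradient_gaussW (x : En n) : gradient (gaussW n) x = x :=
  (hasGradientAt_gaussW x).gradient

lemma lap_eq_sum (w : En n → ℝ) (x : En n) : lap w x = ∑ i, ⟪Dg w x (e n i), e n i⟫ := by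
  simp only [lap, ediv]
  refine Finset.sum_congr rfl fun i _ => ?_
  rw [inner_e]
  rfl

section Smooth

variable {Ω : Set (En n)} (hΩ : IsOpen Ω) {w : En n → ℝ} (hw : ContDiffOn ℝ 3 w Ω)

include hΩ hw

lemma hwx {x : En n} (hx : x ∈ Ω) : ContDiffAt ℝ 3 w x :=
  hw.contDiffAt (hΩ.mem_nhds hx)

lemma hwdiff {x : En n} (hx : x ∈ Ω) : DifferentiableAt ℝ w x :=
  (hwx hΩ hw hx).differentiableAt (by norm_num)

lemma hDw2 {x : En n} (hx : x ∈ Ω) : ContDiffAt ℝ 2 (fderiv ℝ w) x :=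
  (hwx hΩ hw hx).fderiv_right (by norm_num)

lemma hg2 {x : En n} (hx : x ∈ Ω) : ContDiffAt ℝ 2 (gw w) x := by
  have h1 := hDw2 hΩ hw hx
  exact ((toDual ℝ (En n)).symm.contDiff.contDiffAt).comp x h1

lemma hgdiff {x : En n} (hx : x ∈ Ω) : DifferentiableAt ℝ (gw w) x :=
  (hg2 hΩ hw hx).differentiableAt (by norm_num)

lemma hDgdiff {x : En n} (hx : x ∈ Ω) : DifferentiableAt ℝ (Dg w) x := by
  have h : ContDiffAt ℝ 1 (Dg w) x := (hg2 hΩ hw hx).fderiv_right (by norm_num)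
  exact h.differentiableAt (by norm_num)

/-- Hessian symmetry: ⟪Dg v, z⟫ = ⟪Dg z, v⟫ on Ω. -/
lemma hDgsymm {x : En n} (hx : x ∈ Ω) (v z : En n) :
    ⟪Dg w x v, z⟫ = ⟪Dg w x z, v⟫ := by
  -- first: ⟪Dg x v, z⟫ = fderiv ℝ (fderiv ℝ w) x v z
  have key : ∀ u₁ u₂ : En n, ⟪Dg w x u₁, u₂⟫ = fderiv ℝ (fderiv ℝ w) x u₁ u₂ := by
    intro u₁ u₂
    have hfd : DifferentiableAt ℝ (fderiv ℝ w) x :=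
      (hDw2 hΩ hw hx).differentiableAt (by norm_num)
    have hA : HasFDerivAt (fun y => fderiv ℝ w y u₂)
        ((ContinuousLinearMap.apply ℝ ℝ u₂).comp (fderiv ℝ (fderiv ℝ w) x)) x :=
      (ContinuousLinearMap.apply ℝ ℝ u₂).hasFDerivAt.comp x hfd.hasFDerivAt
    have hB := ((hgdiff hΩ hw hx).hasFDerivAt.inner ℝ (hasFDerivAt_const u₂ x))
    have hfunEq : (fun y => ⟪gw w y, u₂⟫) = fun y => fderiv ℝ w y u₂ := by
      funext y; exact inner_gw w y u₂
    rw [hfunEq] at hB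
    have huniq := hB.unique hA
    have := congrArg (fun L : En n →L[ℝ] ℝ => L u₁) huniq
    simpa [Dg] using this
  rw [key v z, key z v]
  have heven : ∀ᶠ y in 𝓝 x, HasFDerivAt w (fderiv ℝ w y) y := by
    filter_upwards [hΩ.mem_nhds hx] with y hy
    exact (hwdiff hΩ hw hy).hasFDerivAt
  exact second_derivative_symmetric_of_eventually heven
    (((hDw2 hΩ hw hx).differentiableAt (by norm_num)).hasFDerivAt) v z

/-- Schwarz for the gradient field: D2g is symmetric in its two arguments. -/
lemma hD2gsymm12 {x : En n} (hx : x ∈ Ω) (u v : En n) :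
    D2g w x u v = D2g w x v u := by
  have heven : ∀ᶠ y in 𝓝 x, HasFDerivAt (gw w) (Dg w y) y := by
    filter_upwards [hΩ.mem_nhds hx] with y hy
    exact (hgdiff hΩ hw hy).hasFDerivAt
  exact second_derivative_symmetric_of_eventually heven (hDgdiff hΩ hw hx).hasFDerivAt u v

/-- The basic derivative of y ↦ ⟪Dg y v, z⟫. -/
lemma hTder {x : En n} (hx : x ∈ Ω) (v z : En n) :
    HasFDerivAt (fun y => ⟪Dg w y v, z⟫)
      ((fderivInnerCLM ℝ (Dg w x v, z)).comp
        (((ContinuousLinearMap.apply ℝ (En n) v).comp (D2g w x)).prod 0)) x := by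
  have hA : HasFDerivAt (fun y => Dg w y v)
      ((ContinuousLinearMap.apply ℝ (En n) v).comp (D2g w x)) x :=
    (ContinuousLinearMap.apply ℝ (En n) v).hasFDerivAt.comp x (hDgdiff hΩ hw hx).hasFDerivAt
  exact hA.inner ℝ (hasFDerivAt_const z x)

/-- Symmetry of the third derivative in the last two slots. -/
lemma hD2gsymm23 {x : En n} (hx : x ∈ Ω) (u v z : En n) :
    ⟪D2g w x u v, z⟫ = ⟪D2g w x u z, v⟫ := by
  have hev : (fun y => ⟪Dg w y v, z⟫) =ᶠ[𝓝 x] fun y => ⟪Dg w y z, v⟫ := by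
    filter_upwards [hΩ.mem_nhds hx] with y hy
    exact hDgsymm hΩ hw hy v z
  have hB1 := hTder hΩ hw hx v z
  have hB2 := hTder hΩ hw hx z v
  have huniq := (hB2.congr_of_eventuallyEq hev).unique hB1
  have := congrArg (fun L : En n →L[ℝ] ℝ => L u) huniq
  simpa using this.symm

lemma hHg {c : ℝ} (hgrad : ∀ y ∈ Ω, ‖gradient w y‖ = c) {x : En n} (hx : x ∈ Ω)
    (v : En n) : ⟪Dg w x v, gw w x⟫ = 0 := by
  have h1 := (hgdiff hΩ hw hx).hasFDerivAt.inner ℝ (hgdiff hΩ hw hx).hasFDerivAt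
  have h2 : (fun _ : En n => c ^ 2) =ᶠ[𝓝 x] fun y => ⟪gw w y, gw w y⟫ := by
    filter_upwards [hΩ.mem_nhds hx] with y hy
    rw [real_inner_self_eq_norm_sq]
    exact (congrArg (· ^ 2) (hgrad y hy)).symm
  have h3 := h1.congr_of_eventuallyEq h2
  have h4 := h3.unique (hasFDerivAt_const _ _)
  have h5 := congrArg (fun L : En n →L[ℝ] ℝ => L v) h4
  simp only [ContinuousLinearMap.coe_comp', Function.comp_apply,
    ContinuousLinearMap.prod_apply, fderivInnerCLM_apply, ContinuousLinearMap.zero_apply] at h5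
  have hcomm : ⟪gw w x, Dg w x v⟫ = ⟪Dg w x v, gw w x⟫ := real_inner_comm _ _
  rw [show (fderiv ℝ (gw w) x) = Dg w x from rfl] at h5
  linarith [h5, hcomm]

/-- Bochner-type identity obtained by differentiating ⟪Dg·v, g⟫ = 0. -/
lemma hBochner {c : ℝ} (hgrad : ∀ y ∈ Ω, ‖gradient w y‖ = c) {x : En n} (hx : x ∈ Ω)
    (u v : En n) : ⟪Dg w x v, Dg w x u⟫ + ⟪D2g w x u v, gw w x⟫ = 0 := by
  have hA : HasFDerivAt (fun y => Dg w y v)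
      ((ContinuousLinearMap.apply ℝ (En n) v).comp (D2g w x)) x :=
    (ContinuousLinearMap.apply ℝ (En n) v).hasFDerivAt.comp x (hDgdiff hΩ hw hx).hasFDerivAt
  have hB := hA.inner ℝ (hgdiff hΩ hw hx).hasFDerivAt
  have hev : (fun _ : En n => (0 : ℝ)) =ᶠ[𝓝 x] fun y => ⟪Dg w y v, gw w y⟫ := by
    filter_upwards [hΩ.mem_nhds hx] with y hy
    exact (hHg hΩ hw hgrad hy v).symm
  have h4 := (hB.congr_of_eventuallyEq hev).unique (hasFDerivAt_const _ _)
  have h5 := congrArg (fun L : En n →L[ℝ] ℝ => L u) h4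
  rw [show fderiv ℝ (gw w) x = Dg w x from rfl] at h5
  simpa [real_inner_comm] using h5

/-- Differentiating the PDE. -/
lemma hPDEder (hpde : ∀ y ∈ Ω, -lapW (gaussW n) w y - w y = 1) {x : En n} (hx : x ∈ Ω)
    (u : En n) :
    ∑ i, ⟪D2g w x u (e n i), e n i⟫ = ⟪x, Dg w x u⟫ + ⟪u, gw w x⟫ - ⟪gw w x, u⟫ := by
  have hLder : HasFDerivAt (fun y => ∑ i, ⟪Dg w y (e n i), e n i⟫)
      (∑ i, (fderivInnerCLM ℝ (Dg w x (e n i), e n i)).comp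
        (((ContinuousLinearMap.apply ℝ (En n) (e n i)).comp (D2g w x)).prod 0)) x :=
    HasFDerivAt.fun_sum fun i _ => hTder hΩ hw hx (e n i) (e n i)
  have hRder := (((hasFDerivAt_id x).inner ℝ (hgdiff hΩ hw hx).hasFDerivAt).sub
    (hwdiff hΩ hw hx).hasFDerivAt).sub_const 1
  have hev : (fun y => ⟪y, gw w y⟫ - w y - 1) =ᶠ[𝓝 x]
      fun y => ∑ i, ⟪Dg w y (e n i), e n i⟫ := by
    filter_upwards [hΩ.mem_nhds hx] with y hy
    rw [← lap_eq_sum]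
    have h1 := hpde y hy
    rw [lapW, gradient_gaussW] at h1
    have : ⟪y, gradient w y⟫ = ⟪y, gw w y⟫ := rfl
    linarith [h1, this ▸ h1]
  have h4 := (hLder.congr_of_eventuallyEq hev).unique hRder
  have h5 := congrArg (fun L : En n →L[ℝ] ℝ => L u) h4
  simp only [ContinuousLinearMap.coe_sum', Finset.sum_apply, ContinuousLinearMap.coe_comp',
    Function.comp_apply, ContinuousLinearMap.prod_apply, fderivInnerCLM_apply,
    ContinuousLinearMap.zero_apply, ContinuousLinearMap.coe_sub', Pi.sub_apply,
    ContinuousLinearMap.coe_id', id_eq, ContinuousLinearMap.apply_apply,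
    inner_zero_right, zero_add, add_zero] at h5
  have hfw : fderiv ℝ w x u = ⟪gw w x, u⟫ := (inner_gw w x u).symm
  rw [hfw] at h5
  exact h5

/-- The Hessian vanishes on Ω. -/
lemma hDg0 {c : ℝ} (hpde : ∀ y ∈ Ω, -lapW (gaussW n) w y - w y = 1)
    (hgrad : ∀ y ∈ Ω, ‖gradient w y‖ = c) {x : En n} (hx : x ∈ Ω) (v : En n) :
    Dg w x v = 0 := by
  -- Dg x (g x) = 0
  have hGg : Dg w x (gw w x) = 0 := by
    rw [← inner_self_eq_zero (𝕜 := ℝ)]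
    rw [hDgsymm hΩ hw hx (gw w x) (Dg w x (gw w x))]
    exact hHg hΩ hw hgrad hx _
  -- the PDE derivative in direction g x vanishes
  have h1 : ∑ i, ⟪D2g w x (gw w x) (e n i), e n i⟫ = 0 := by
    rw [hPDEder hΩ hw hpde hx (gw w x), hGg]
    simp
  -- each summand equals −‖Dg x eᵢ‖²
  have h2 : ∀ i : Fin n, ⟪D2g w x (gw w x) (e n i), e n i⟫
      = -⟪Dg w x (e n i), Dg w x (e n i)⟫ := by
    intro i
    have s12 : D2g w x (gw w x) (e n i) = D2g w x (e n i) (gw w x) :=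
      hD2gsymm12 hΩ hw hx (gw w x) (e n i)
    rw [s12]
    rw [hD2gsymm23 hΩ hw hx (e n i) (gw w x) (e n i)]
    have := hBochner hΩ hw hgrad hx (e n i) (e n i)
    linarith
  rw [Finset.sum_congr rfl fun i _ => h2 i] at h1
  have h3 : ∑ i, ⟪Dg w x (e n i), Dg w x (e n i)⟫ = 0 := by
    rw [Finset.sum_neg_distrib] at h1; linarith
  have h4 : ∀ i : Fin n, Dg w x (e n i) = 0 := by
    intro i
    rw [← inner_self_eq_zero (𝕜 := ℝ)]
    have hnn : ∀ j ∈ (Finset.univ : Finset (Fin n)), (0:ℝ) ≤ ⟪Dg w x (e n j), Dg w x (e n j)⟫ :=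
      fun j _ => real_inner_self_nonneg
    exact (Finset.sum_eq_zero_iff_of_nonneg hnn).1 h3 i (Finset.mem_univ i)
  -- conclude for arbitrary v, coordinatewise
  ext j
  have : (Dg w x v) j = ⟪Dg w x v, e n j⟫ := (inner_e _ j).symm
  rw [this, hDgsymm hΩ hw hx v (e n j), h4 j]
  simp

end Smooth

end Stmt7Aux

/-- if `w` is a C³ solution of −Δ_{φₙ}w − w = 1 on a nonempty connected
open set Ω with |∇w| ≡ c on Ω, then w(x) = ⟨a,x⟩ − 1 for some vector a with |a| = c;
in particular w is affine. -/
theorem stmt7 (n : ℕ) (hn : 1 ≤ n) (Ω : Set (En n)) (hΩ : IsOpen Ω)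
    (hne : Ω.Nonempty) (hconn : IsConnected Ω) (c : ℝ) (hc : 0 ≤ c)
    (w : En n → ℝ) (hw : ContDiffOn ℝ 3 w Ω)
    (hpde : ∀ x ∈ Ω, -lapW (gaussW n) w x - w x = 1)
    (hgrad : ∀ x ∈ Ω, ‖gradient w x‖ = c) :
    ∃ a : En n, ‖a‖ = c ∧ ∀ x ∈ Ω, w x = (inner ℝ a x : ℝ) - 1 := by
  classical
  obtain ⟨x₀, hx₀⟩ := hne
  set g : En n → En n := Stmt7Aux.gw w with hgdef
  have hDg0 : ∀ x ∈ Ω, ∀ v, Stmt7Aux.Dg w x v = 0 := fun x hx v =>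
    Stmt7Aux.hDg0 hΩ hw hpde hgrad hx v
  -- local constancy of the gradient
  have hloc : ∀ x ∈ Ω, ∃ r, 0 < r ∧ Metric.ball x r ⊆ Ω ∧
      ∀ y ∈ Metric.ball x r, g y = g x := by
    intro x hx
    obtain ⟨r, hr, hball⟩ := Metric.isOpen_iff.mp hΩ x hx
    refine ⟨r, hr, hball, fun y hy => ?_⟩
    refine (convex_ball x r).is_const_of_fderivWithin_eq_zero
      (fun z hz => (Stmt7Aux.hgdiff hΩ hw (hball hz)).differentiableWithinAt) ?_ hy
      (Metric.mem_ball_self hr)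
    intro z hz
    rw [fderivWithin_of_isOpen Metric.isOpen_ball hz]
    refine ContinuousLinearMap.ext fun v => ?_
    show Stmt7Aux.Dg w z v = (0 : En n →L[ℝ] En n) v
    rw [hDg0 z (hball hz) v]; rfl
  choose! r hr hballΩ hballc using hloc
  -- global constancy via connectedness
  have hga : ∀ x ∈ Ω, g x = g x₀ := by
    intro x hx
    by_contra hne'
    set U := ⋃ (y : En n) (_ : y ∈ Ω ∧ g y = g x₀), Metric.ball y (r y) with hU
    set V := ⋃ (y : En n) (_ : y ∈ Ω ∧ g y ≠ g x₀), Metric.ball y (r y) with hV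
    have hUopen : IsOpen U := isOpen_iUnion fun y => isOpen_iUnion fun _ => Metric.isOpen_ball
    have hVopen : IsOpen V := isOpen_iUnion fun y => isOpen_iUnion fun _ => Metric.isOpen_ball
    have hsub : Ω ⊆ U ∪ V := by
      intro z hz
      by_cases hgz : g z = g x₀
      · exact Or.inl (Set.mem_iUnion.2 ⟨z, Set.mem_iUnion.2 ⟨⟨hz, hgz⟩,
          Metric.mem_ball_self (hr z hz)⟩⟩)
      · exact Or.inr (Set.mem_iUnion.2 ⟨z, Set.mem_iUnion.2 ⟨⟨hz, hgz⟩,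
          Metric.mem_ball_self (hr z hz)⟩⟩)
    have h1 : (Ω ∩ U).Nonempty := ⟨x₀, hx₀, Set.mem_iUnion.2 ⟨x₀, Set.mem_iUnion.2
      ⟨⟨hx₀, rfl⟩, Metric.mem_ball_self (hr x₀ hx₀)⟩⟩⟩
    have h2 : (Ω ∩ V).Nonempty := ⟨x, hx, Set.mem_iUnion.2 ⟨x, Set.mem_iUnion.2
      ⟨⟨hx, hne'⟩, Metric.mem_ball_self (hr x hx)⟩⟩⟩
    obtain ⟨z, hzΩ, hzU, hzV⟩ := hconn.isPreconnected U V hUopen hVopen hsub h1 h2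
    obtain ⟨y₁, hy₁⟩ := Set.mem_iUnion.1 hzU
    obtain ⟨⟨hy₁Ω, hy₁a⟩, hzb₁⟩ := Set.mem_iUnion.1 hy₁
    obtain ⟨y₂, hy₂⟩ := Set.mem_iUnion.1 hzV
    obtain ⟨⟨hy₂Ω, hy₂a⟩, hzb₂⟩ := Set.mem_iUnion.1 hy₂
    have e1 : g z = g x₀ := (hballc y₁ hy₁Ω z hzb₁).trans hy₁a
    have e2 : g z ≠ g x₀ := fun h => hy₂a ((hballc y₂ hy₂Ω z hzb₂).symm.trans h)
    exact e2 e1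
  refine ⟨g x₀, ?_, ?_⟩
  · rw [← hgrad x₀ hx₀]; rfl
  · intro x hx
    have hlap : lap w x = 0 := by
      rw [Stmt7Aux.lap_eq_sum]
      refine Finset.sum_eq_zero fun i _ => ?_
      rw [hDg0 x hx (Stmt7Aux.e n i)]
      simp
    have h1 := hpde x hx
    rw [lapW, hlap, Stmt7Aux.gradient_gaussW] at h1
    have h2 : (inner ℝ x (gradient w x) : ℝ) = (inner ℝ (g x₀) x : ℝ) := by
      rw [show gradient w x = g x from rfl, hga x hx, real_inner_comm]
    rw [h2] at h1
    linarith
end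
end
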